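/- Define the ruffle product m' on K by: m'(a_\lambda, a_\mu) = \sum_r \sum_{\nu \in P_r(\lambda,\mu)} a_\nu over all ruffles r, where collisions of equal letters keep that letter and collisions of unequal letters contribute each of \bullet, \circ, and deletion. Then m'(a_{\pi(1)}, a_{\pi(n)}) = (n+1) a_{\pi(n+1)} + n a_{\pi(n)}, where \pi(k) is the word of k letters \bullet. -/

import Mathlib

/-- A weight: a word in the two-letter alphabet `{•, ∘}` (encoded as `Bool`,
with `true = •` and `false = ∘`). -/
abbrev Word : Type := List Bool

/-- The Grothendieck group `K`: the free `ℤ`-module on the set of weights,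
with basis `a_λ = Finsupp.single λ 1`. -/
abbrev K : Type := Word →₀ ℤ

/-- The model of `K ⊗ K`: the free `ℤ`-module on pairs of weights, with
`a_λ ⊗ a_μ = Finsupp.single (λ, μ) 1`. -/
abbrev K2 : Type := Word × Word →₀ ℤ

/-- `res` on a basis element: `res(a_λ) = ∑_{i=0}^n a_{λ[1,i]} ⊗ a_{λ(i,n]}
+ ∑_{i=1}^n a_{λ[1,i)} ⊗ a_{λ(i,n]}` where `n = ℓ(λ)`. -/
noncomputable def resWord (w : Word) : K2 :=
  (∑ i ∈ Finset.range (w.length + 1), Finsupp.single (w.take i, w.drop i) 1)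
    + ∑ i ∈ Finset.range w.length, Finsupp.single (w.take i, w.drop (i + 1)) 1

/-- The restriction comultiplication `res : K → K ⊗ K`. -/
noncomputable def res : K →ₗ[ℤ] K2 :=
  Finsupp.lift K2 ℤ Word resWord

/-- Prepending a letter to every word, extended linearly to `K`. -/
noncomputable def consK (a : Bool) : K →ₗ[ℤ] K :=
  Finsupp.lmapDomain ℤ ℤ (fun w => a :: w)

/-- The ruffle product `m'(a_λ, a_μ)`, defined by the standard recursion on the first
letter of the result: the first letter comes from `λ` only, from `μ` only, or from a
collision of the first letters of `λ` and `μ`.  A collision of equal letters keeps that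
letter; a collision of unequal letters (a neutral collision, the wildcard `?`)
contributes each of `•`, `∘`, and deletion.  This is exactly the sum
`∑_r ∑_{ν ∈ P_r(λ,μ)} a_ν` over all ruffles `r`. -/
noncomputable def ruffle : Word → Word → K
  | [], μ => Finsupp.single μ 1
  | a :: l, [] => Finsupp.single (a :: l) 1
  | a :: l, b :: μ =>
      consK a (ruffle l (b :: μ)) + consK b (ruffle (a :: l) μ) +
        (if a = b then consK a (ruffle l μ)
         else consK true (ruffle l μ) + consK false (ruffle l μ) + ruffle l μ)
  termination_by l μ => l.length + μ.length
  decreasing_by all_goals simp <;> omega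

lemma consK_single (a : Bool) (w : Word) :
    consK a (Finsupp.single w 1) = Finsupp.single (a :: w) 1 := by
  simp [consK, Finsupp.lmapDomain, Finsupp.mapDomain_single]

/-- `π(k)`: the word of `k` letters `•`. -/
def piW (k : ℕ) : Word := List.replicate k true

/-- The ruffle product satisfies `m'(a_{π(1)}, a_{π(n)}) = (n+1) a_{π(n+1)} + n a_{π(n)}`. -/
theorem ruffle_pi_one_pi_n (n : ℕ) :
    ruffle (piW 1) (piW n)
      = (n + 1 : ℤ) • Finsupp.single (piW (n + 1)) 1
        + (n : ℤ) • Finsupp.single (piW n) 1 := by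
  induction n with
  | zero =>
      show ruffle [true] [] = _
      rw [ruffle]
      simp [piW]
  | succ n ih =>
      have hpi : piW (n + 1) = true :: piW n := rfl
      rw [hpi]
      show ruffle [true] (true :: piW n) = _
      rw [ruffle]
      have h0 : ∀ μ : Word, ruffle [] μ = Finsupp.single μ 1 := fun μ => by
        cases μ <;> rw [ruffle]
      have ih' : ruffle [true] (piW n) = _ := ih
      rw [h0, h0, if_pos rfl, ih']
      simp only [map_add, map_smul, consK_single]
      have h1 : (true :: piW (n + 1)) = piW (n + 2) := rfl
      have h2 : (true :: piW n) = piW (n + 1) := rfl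
      have h3 : piW (n + 1 + 1) = piW (n + 2) := by norm_num
      rw [h1, h2, h3]
      push_cast
      rw [h1]
      module
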